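/- (Embedding result for mean–variance optimization.) Let (Ω, F, P) be a probability space, let A be a nonempty index set (the set of admissible strategies), and let (W_P)_{P∈A} be a family of square-integrable real-valued random variables (the terminal wealths). Fix ρ > 0. If P* ∈ A maximizes the mean–variance objective, i.e. E[W_{P*}] − ρ·Var(W_{P*}) ≥ E[W_P] − ρ·Var(W_P) for all P ∈ A, then P* also minimizes the quadratic-target objective with target γ̃ = 1/(2ρ) + E[W_{P*}]: namely, E[(W_{P*} − γ̃)²] ≤ E[(W_P − γ̃)²] for all P ∈ A. -/

import Mathlib

open MeasureTheory

/-- **Embedding result for mean–variance optimization.** Let `(W_P)_{P ∈ A}` be a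
family of square-integrable terminal wealths on a probability space, indexed by a
nonempty admissible set `A`, and fix `ρ > 0`. If `P*` maximizes the mean–variance
objective `E[W_P] − ρ·Var(W_P)` (with `Var(X) = E[X²] − (E[X])²`), then `P*` also
minimizes the quadratic-target objective `E[(W_P − γ̃)²]` with target
`γ̃ = 1/(2ρ) + E[W_{P*}]`. -/
lemma expand_sq_integral {Ω : Type*} [MeasurableSpace Ω] (μ : Measure Ω)
    [IsProbabilityMeasure μ] (f : Ω → ℝ) (hf : MemLp f 2 μ) (γ : ℝ) :
    ∫ ω, (f ω - γ) ^ 2 ∂μ =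
      (∫ ω, (f ω) ^ 2 ∂μ) - 2 * γ * (∫ ω, f ω ∂μ) + γ ^ 2 := by
  have hsq : Integrable (fun ω => (f ω) ^ 2) μ := by
    simpa [sq] using hf.integrable_sq
  have hint : Integrable f μ := hf.integrable one_le_two
  have : ∫ ω, (f ω - γ) ^ 2 ∂μ
      = ∫ ω, ((f ω) ^ 2 - 2 * γ * f ω + γ ^ 2) ∂μ := by
    congr 1; ext ω; ring
  have hsub : Integrable (fun ω => (f ω) ^ 2 - 2 * γ * f ω) μ := by
    exact hsq.sub (hint.const_mul _)
  have hmul : Integrable (fun ω => 2 * γ * f ω) μ := hint.const_mul _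
  rw [this, integral_add hsub (integrable_const _),
    integral_sub hsq hmul, integral_const_mul, integral_const]
  simp

theorem mean_variance_embedding
    {Ω : Type*} [MeasurableSpace Ω] (μ : Measure Ω) [IsProbabilityMeasure μ]
    {A : Type*} [Nonempty A] (W : A → Ω → ℝ)
    (hmeas : ∀ P : A, Measurable (W P))
    (hL2 : ∀ P : A, MemLp (W P) 2 μ)
    (ρ : ℝ) (hρ : 0 < ρ) (Pstar : A)
    (hopt : ∀ P : A,
      (∫ ω, W P ω ∂μ) -
          ρ * ((∫ ω, (W P ω) ^ 2 ∂μ) - (∫ ω, W P ω ∂μ) ^ 2) ≤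
        (∫ ω, W Pstar ω ∂μ) -
          ρ * ((∫ ω, (W Pstar ω) ^ 2 ∂μ) - (∫ ω, W Pstar ω ∂μ) ^ 2)) :
    ∀ P : A,
      (∫ ω, (W Pstar ω - (1 / (2 * ρ) + ∫ ω', W Pstar ω' ∂μ)) ^ 2 ∂μ) ≤
        ∫ ω, (W P ω - (1 / (2 * ρ) + ∫ ω', W Pstar ω' ∂μ)) ^ 2 ∂μ := by
  intro P
  have h := hopt P
  set m := ∫ ω, W P ω ∂μ with hm
  set ms := ∫ ω, W Pstar ω ∂μ with hms
  set s := ∫ ω, (W P ω) ^ 2 ∂μ with hs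
  set ss := ∫ ω, (W Pstar ω) ^ 2 ∂μ with hss
  set γ : ℝ := 1 / (2 * ρ) + ms with hγ
  rw [expand_sq_integral μ (W Pstar) (hL2 Pstar) γ,
      expand_sq_integral μ (W P) (hL2 P) γ]
  rw [← hm, ← hms, ← hs, ← hss]
  have key : ρ * (m ^ 2 - ms ^ 2) + (m - ms) ≤ ρ * (s - ss) := by nlinarith [h]
  rw [hγ, ← sub_nonneg]
  have hid : s - 2 * (1 / (2 * ρ) + ms) * m + (1 / (2 * ρ) + ms) ^ 2 -
      (ss - 2 * (1 / (2 * ρ) + ms) * ms + (1 / (2 * ρ) + ms) ^ 2) =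
      ((ρ * (s - ss) - (ρ * (m ^ 2 - ms ^ 2) + (m - ms))) + ρ * (m - ms) ^ 2) / ρ := by
    field_simp
    ring
  rw [hid]
  apply div_nonneg _ hρ.le
  have := mul_nonneg hρ.le (sq_nonneg (m - ms))
  linarith
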